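/- arXiv:1403.3622 — 6 statements merged into one kernel-verified Lean document; each statement's English description precedes it below -/
import Mathlib

section
/- Let τ be a fuzzy soft topology. For any family {g_λ}_{λ∈Λ} of semiopen fuzzy soft sets, the pointwise supremum ⋁_{λ∈Λ} g_λ is a semiopen fuzzy soft set. -/
open unitInterval

instance : Fact ((0:ℝ) ≤ 1) := ⟨zero_le_one⟩

/-- A fuzzy soft set over universe `U` with parameter set `E`. -/
def FuzzySoftSet (E U : Type*) : Type _ := E → U → unitInterval

noncomputable instance {E U : Type*} : CompleteLattice (FuzzySoftSet E U) :=
  inferInstanceAs (CompleteLattice (E → U → unitInterval))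

/-- Complement of a fuzzy soft set: `f^c e x = 1 - f e x`. -/
def FuzzySoftSet.compl {E U : Type*} (f : FuzzySoftSet E U) : FuzzySoftSet E U :=
  fun e x => unitInterval.symm (f e x)

/-- A fuzzy soft topology: contains the constant-0 and constant-1 fuzzy soft sets,
is closed under pairwise pointwise minimum, and under pointwise suprema of subfamilies. -/
structure FuzzySoftTopology (E U : Type*) where
  opens : Set (FuzzySoftSet E U)
  bot_mem : (⊥ : FuzzySoftSet E U) ∈ opens
  top_mem : (⊤ : FuzzySoftSet E U) ∈ opens
  inf_mem : ∀ g h : FuzzySoftSet E U, g ∈ opens → h ∈ opens → g ⊓ h ∈ opens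
  sSup_mem : ∀ s : Set (FuzzySoftSet E U), s ⊆ opens → sSup s ∈ opens

namespace FuzzySoftTopology

variable {E U : Type*}

/-- `g` is an open fuzzy soft set. -/
def IsOpen (t : FuzzySoftTopology E U) (g : FuzzySoftSet E U) : Prop := g ∈ t.opens

/-- `g` is a closed fuzzy soft set: its complement is open. -/
def IsClosed (t : FuzzySoftTopology E U) (g : FuzzySoftSet E U) : Prop := t.IsOpen g.compl

/-- Interior: supremum of all open fuzzy soft sets below `g`. -/
noncomputable def interior (t : FuzzySoftTopology E U) (g : FuzzySoftSet E U) : FuzzySoftSet E U :=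
  sSup {h | t.IsOpen h ∧ h ≤ g}

/-- Closure: infimum of all closed fuzzy soft sets above `g`. -/
noncomputable def closure (t : FuzzySoftTopology E U) (g : FuzzySoftSet E U) : FuzzySoftSet E U :=
  sInf {h | t.IsClosed h ∧ g ≤ h}

/-- `g` is semiopen: there is an open `h` with `h ≤ g ≤ cl h`. -/
def SemiOpen (t : FuzzySoftTopology E U) (g : FuzzySoftSet E U) : Prop :=
  ∃ h : FuzzySoftSet E U, t.IsOpen h ∧ h ≤ g ∧ g ≤ t.closure h

/-- `g` is semiclosed: there is a closed `k` with `int k ≤ g ≤ k`. -/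
def SemiClosed (t : FuzzySoftTopology E U) (g : FuzzySoftSet E U) : Prop :=
  ∃ k : FuzzySoftSet E U, t.IsClosed k ∧ t.interior k ≤ g ∧ g ≤ k

/-- Fuzzy soft semi-closure: infimum of all semiclosed fuzzy soft sets above `g`. -/
noncomputable def sscl (t : FuzzySoftTopology E U) (g : FuzzySoftSet E U) : FuzzySoftSet E U :=
  sInf {s | t.SemiClosed s ∧ g ≤ s}

/-- Fuzzy soft semi-interior: supremum of all semiopen fuzzy soft sets below `g`. -/
noncomputable def ssint (t : FuzzySoftTopology E U) (g : FuzzySoftSet E U) : FuzzySoftSet E U :=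
  sSup {s | t.SemiOpen s ∧ s ≤ g}

end FuzzySoftTopology

/-- A fuzzy soft point: nonzero at exactly one parameter. -/
def FuzzySoftSet.IsPoint {E U : Type*} (p : FuzzySoftSet E U) : Prop :=
  ∃ e₀ : E, p e₀ ≠ (fun _ => 0) ∧ ∀ e : E, e ≠ e₀ → p e = fun _ => 0


theorem sSup_semiOpen {E U : Type*} (t : FuzzySoftTopology E U)
    {Λ : Type*} (g : Λ → FuzzySoftSet E U)
    (hg : ∀ l : Λ, t.SemiOpen (g l)) :
    t.SemiOpen (⨆ l : Λ, g l) := by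
  choose h hopen hle hcl using hg
  refine ⟨⨆ l, h l, ?_, ?_, ?_⟩
  · have := t.sSup_mem (Set.range h) (by rintro _ ⟨l, rfl⟩; exact hopen l)
    simpa [iSup, FuzzySoftTopology.IsOpen] using this
  · exact iSup_mono hle
  · refine iSup_le fun l => le_trans (hcl l) ?_
    exact sInf_le_sInf fun k hk => ⟨hk.1, le_trans (le_iSup h l) hk.2⟩
end

section
/- Let τ be a fuzzy soft topology. For any family {g_λ}_{λ∈Λ} of semiclosed fuzzy soft sets, the pointwise infimum ⋀_{λ∈Λ} g_λ is a semiclosed fuzzy soft set. -/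
open unitInterval

/-- `unitInterval.symm` as an order isomorphism to the dual order. -/
noncomputable def unitIntervalSymmIso : unitInterval ≃o unitIntervalᵒᵈ where
  toFun x := OrderDual.toDual (unitInterval.symm x)
  invFun x := unitInterval.symm (OrderDual.ofDual x)
  left_inv := unitInterval.symm_symm
  right_inv := unitInterval.symm_symm
  map_rel_iff' := fun {_ _} => unitInterval.strictAnti_symm.le_iff_ge

lemma unitInterval_symm_iInf {ι : Type*} (f : ι → unitInterval) :
    unitInterval.symm (⨅ i, f i) = ⨆ i, unitInterval.symm (f i) :=
  congrArg OrderDual.ofDual (unitIntervalSymmIso.map_iInf f)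

lemma FuzzySoftSet.compl_iInf {E U Λ : Type*} (k : Λ → FuzzySoftSet E U) :
    (⨅ l, k l).compl = ⨆ l, (k l).compl := by
  funext e x
  have h1 : (⨅ l, k l) e x = ⨅ l, k l e x := by
    exact (congrFun (iInf_apply (α := E) (β := fun _ => U → unitInterval) (f := k) (a := e)) x).trans
      (iInf_apply (f := fun l => k l e) (a := x))
  have h2 : (⨆ l, FuzzySoftSet.compl (k l)) e x = ⨆ l, unitInterval.symm (k l e x) := by
    exact (congrFun (iSup_apply (α := E) (β := fun _ => U → unitInterval) (f := fun l => (k l).compl) (a := e)) x).trans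
      (iSup_apply (f := fun l => (k l).compl e) (a := x))
  rw [show (⨅ l, k l).compl e x = unitInterval.symm ((⨅ l, k l) e x) from rfl, h1, h2,
    unitInterval_symm_iInf]

lemma FuzzySoftTopology.interior_mono {E U : Type*} (t : FuzzySoftTopology E U)
    {a b : FuzzySoftSet E U} (h : a ≤ b) : t.interior a ≤ t.interior b :=
  sSup_le_sSup (fun _ hs => ⟨hs.1, hs.2.trans h⟩)


theorem sInf_semiClosed {E U : Type*} (t : FuzzySoftTopology E U)
    {Λ : Type*} (g : Λ → FuzzySoftSet E U)
    (hg : ∀ l : Λ, t.SemiClosed (g l)) :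
    t.SemiClosed (⨅ l : Λ, g l)  := by
  classical
  set K : Λ → FuzzySoftSet E U := fun l => Classical.choose (hg l) with hK
  have hKspec : ∀ l, t.IsClosed (K l) ∧ t.interior (K l) ≤ g l ∧ g l ≤ K l :=
    fun l => Classical.choose_spec (hg l)
  refine ⟨⨅ l, K l, ?_, ?_, ?_⟩
  · unfold FuzzySoftTopology.IsClosed FuzzySoftTopology.IsOpen
    rw [FuzzySoftSet.compl_iInf]
    rw [iSup, ← Set.image_univ]
    exact t.sSup_mem _ (by
      rintro s ⟨l, -, rfl⟩
      exact (hKspec l).1)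
  · refine le_iInf fun l => ?_
    exact (t.interior_mono (iInf_le K l)).trans (hKspec l).2.1
  · exact iInf_mono fun l => (hKspec l).2.2
end

section
/- Let τ be a fuzzy soft topology. If m is a semiclosed fuzzy soft set and k is a fuzzy soft set with int(m) ≤ k ≤ m, then k is a semiclosed fuzzy soft set. -/
open unitInterval

theorem semiClosed_of_between {E U : Type*} (t : FuzzySoftTopology E U)
    {m k : FuzzySoftSet E U} (hm : t.SemiClosed m)
    (h1 : t.interior m ≤ k) (h2 : k ≤ m) :
    t.SemiClosed k := by
  obtain ⟨c, hc, hic, hmc⟩ := hm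
  refine ⟨c, hc, ?_, h2.trans hmc⟩
  have hopen : t.IsOpen (t.interior c) :=
    t.sSup_mem _ (fun h hh => hh.1)
  have : t.interior c ≤ t.interior m :=
    le_sSup ⟨hopen, hic⟩
  exact this.trans h1
end

section
/- Let τ be a fuzzy soft topology. A fuzzy soft set g is semiopen if and only if for every fuzzy soft point p with p ≤ g there exists a semiopen fuzzy soft set h with p ≤ h ≤ g. -/
open unitInterval

lemma closure_mono' {E U : Type*} (t : FuzzySoftTopology E U) {a b : FuzzySoftSet E U}
    (hab : a ≤ b) : t.closure a ≤ t.closure b := by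
  apply sInf_le_sInf
  intro h hh
  exact ⟨hh.1, le_trans hab hh.2⟩

lemma semiOpen_sSup' {E U : Type*} (t : FuzzySoftTopology E U) (S : Set (FuzzySoftSet E U))
    (hS : ∀ s ∈ S, t.SemiOpen s) : t.SemiOpen (sSup S) := by
  set O := sSup {u : FuzzySoftSet E U | t.IsOpen u ∧ ∃ s ∈ S, u ≤ s ∧ s ≤ t.closure u} with hO
  refine ⟨O, t.sSup_mem _ (fun u hu => hu.1), ?_, ?_⟩
  · apply sSup_le
    intro u hu
    obtain ⟨s, hs, hus, _⟩ := hu.2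
    exact le_trans hus (le_sSup hs)
  · apply sSup_le
    intro s hs
    obtain ⟨u, hu, hus, hsu⟩ := hS s hs
    exact le_trans hsu (closure_mono' t (le_sSup ⟨hu, s, hs, hus, hsu⟩))

theorem semiOpen_iff_points {E U : Type*} (t : FuzzySoftTopology E U)
    (g : FuzzySoftSet E U) :
    t.SemiOpen g ↔
      ∀ p : FuzzySoftSet E U, p.IsPoint → p ≤ g →
        ∃ h : FuzzySoftSet E U, t.SemiOpen h ∧ p ≤ h ∧ h ≤ g := by
  classical
  constructor
  · intro hg p _ hpg
    exact ⟨g, hg, hpg, le_rfl⟩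
  · intro H
    set S : Set (FuzzySoftSet E U) := {h | t.SemiOpen h ∧ h ≤ g} with hSdef
    have hg : g = sSup S := by
      apply le_antisymm
      · intro e x
        by_cases he : g e = fun _ => (0 : unitInterval)
        · have h0 : g e x = 0 := by rw [he]
          rw [h0]
          exact unitInterval.nonneg'
        · set p : FuzzySoftSet E U := fun e' => if e' = e then g e else fun _ => 0 with hp
          have hpt : p.IsPoint := ⟨e, by simpa [hp] using he, fun e' he' => by simp [hp, he']⟩
          have hpg : p ≤ g := by
            intro e' x'
            by_cases h : e' = e
            · subst h; simp [hp]
            · simp only [hp, if_neg h]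
              exact unitInterval.nonneg'
          obtain ⟨h, hh, hph, hhg⟩ := H p hpt hpg
          have hx : g e x = p e x := by simp [hp]
          calc g e x = p e x := hx
            _ ≤ h e x := hph e x
            _ ≤ sSup S e x := le_sSup (show h ∈ S from ⟨hh, hhg⟩) e x
      · exact sSup_le fun h hh => hh.2
    rw [hg]
    exact semiOpen_sSup' t S fun s hs => hs.1
end

section
/- Let τ be a fuzzy soft topology. For any fuzzy soft set g, the fuzzy soft semi-interior ssint(g) is the largest semiopen fuzzy soft set contained in g: that is, ssint(g) ≤ g, ssint(g) is semiopen, and for every semiopen fuzzy soft set s with s ≤ g one has s ≤ ssint(g). -/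
open unitInterval

lemma myClosure_mono {E U : Type*} (t : FuzzySoftTopology E U) {a b : FuzzySoftSet E U}
    (h : a ≤ b) : t.closure a ≤ t.closure b := by
  apply sInf_le_sInf
  rintro k ⟨hk, hbk⟩
  exact ⟨hk, h.trans hbk⟩

theorem ssint_isLargest_semiOpen {E U : Type*} (t : FuzzySoftTopology E U)
    (g : FuzzySoftSet E U) :
    t.ssint g ≤ g ∧ t.SemiOpen (t.ssint g) ∧
      ∀ s : FuzzySoftSet E U, t.SemiOpen s → s ≤ g → s ≤ t.ssint g := by
  refine ⟨sSup_le fun s hs => hs.2, ?_, fun s hso hsg => le_sSup ⟨hso, hsg⟩⟩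
  classical
  set S := {s : FuzzySoftSet E U | t.SemiOpen s ∧ s ≤ g} with hS
  choose! H hHopen hHle hHcl using fun (s : FuzzySoftSet E U) (hs : t.SemiOpen s) => hs
  refine ⟨sSup (Set.image (fun s => if t.SemiOpen s then H s else ⊥) S), ?_, ?_, ?_⟩
  · apply t.sSup_mem
    rintro _ ⟨s, hs, rfl⟩
    simp only [if_pos hs.1]
    exact hHopen s hs.1
  · apply sSup_le
    rintro _ ⟨s, hs, rfl⟩
    simp only [if_pos hs.1]
    exact le_sSup_of_le hs (hHle s hs.1)
  · apply sSup_le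
    intro s hs
    refine (hHcl s hs.1).trans (myClosure_mono t ?_)
    refine le_sSup_of_le ⟨s, hs, rfl⟩ ?_
    simp only [if_pos hs.1]
    exact le_rfl
end

section
/- Let τ be a fuzzy soft topology. For any fuzzy soft set g, sscl(sscl(g)) = sscl(g) and ssint(ssint(g)) = ssint(g). -/
open unitInterval

theorem sscl_idem_and_ssint_idem {E U : Type*} (t : FuzzySoftTopology E U)
    (g : FuzzySoftSet E U) :
    t.sscl (t.sscl g) = t.sscl g ∧ t.ssint (t.ssint g) = t.ssint g := by
  have hle : g ≤ t.sscl g := le_sInf fun s hs => hs.2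
  have hge : t.ssint g ≤ g := sSup_le fun s hs => hs.2
  constructor
  · unfold FuzzySoftTopology.sscl
    congr 1
    ext s
    constructor
    · rintro ⟨hsc, hls⟩
      exact ⟨hsc, hle.trans hls⟩
    · rintro ⟨hsc, hls⟩
      exact ⟨hsc, sInf_le ⟨hsc, hls⟩⟩
  · unfold FuzzySoftTopology.ssint
    congr 1
    ext s
    constructor
    · rintro ⟨hso, hls⟩
      exact ⟨hso, hls.trans hge⟩
    · rintro ⟨hso, hls⟩
      exact ⟨hso, le_sSup ⟨hso, hls⟩⟩
end
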